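/- Let N ≥ 1, let u : ℝ^N → ℝ be bounded and upper semicontinuous, let r > 0, and let x₀ ∈ ℝ^N. Suppose (p, X) ∈ J^{2,+} u^r(x₀), where u^r is the sup-convolution of u. Then, setting y₀ = x₀ + r² p, one has u^r(x₀) = u(y₀) − (r²/2)|p|² and (p, X) ∈ J^{2,+} u(y₀). -/

import Mathlib

open scoped RealInnerProductSpace Topology
open Filter Asymptotics Metric MeasureTheory

noncomputable section

/-- Euclidean space ℝ^N. -/
abbrev E (N : ℕ) : Type := EuclideanSpace ℝ (Fin N)

/-- Sup-convolution `u^r(x) = sup_y (u(y) - |x-y|²/(2r²))`. -/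
def supConv {N : ℕ} (u : E N → ℝ) (r : ℝ) (x : E N) : ℝ :=
  ⨆ y : E N, (u y - ‖x - y‖ ^ 2 / (2 * r ^ 2))

/-- `(p, X)` belongs to the second-order superjet `J^{2,+} w (x)`:
`X` is symmetric and `w(x+h) ≤ w(x) + ⟨p,h⟩ + (1/2)⟨Xh,h⟩ + o(‖h‖²)` as `h → 0`. -/
def InSuperjet {N : ℕ} (w : E N → ℝ) (x : E N) (p : E N) (X : E N →ₗ[ℝ] E N) : Prop :=
  X.IsSymmetric ∧ ∃ e : E N → ℝ, e =o[𝓝 (0 : E N)] (fun h => ‖h‖ ^ 2) ∧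
    ∀ᶠ h in 𝓝 (0 : E N), w (x + h) ≤ w x + ⟪p, h⟫ + (1 / 2) * ⟪X h, h⟫ + e h

/-- Magic property of sup-convolutions: if `(p, X) ∈ J^{2,+} u^r(x₀)` then, with
`y₀ = x₀ + r²p`, one has `u^r(x₀) = u(y₀) - (r²/2)|p|²` and `(p, X) ∈ J^{2,+} u(y₀)`. -/
theorem supConv_superjet (N : ℕ) (hN : 1 ≤ N) (u : E N → ℝ)
    (hb : ∃ M : ℝ, ∀ x, |u x| ≤ M) (husc : UpperSemicontinuous u)
    (r : ℝ) (hr : 0 < r) (x₀ p : E N) (X : E N →ₗ[ℝ] E N)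
    (hpX : InSuperjet (supConv u r) x₀ p X) :
    supConv u r x₀ = u (x₀ + r ^ 2 • p) - (r ^ 2 / 2) * ‖p‖ ^ 2 ∧
    InSuperjet u (x₀ + r ^ 2 • p) p X := by
  obtain ⟨M, hM⟩ := hb
  obtain ⟨hXsym, e, he, hev⟩ := hpX
  have hr2 : (0:ℝ) < r ^ 2 := by positivity
  set y₀ : E N := x₀ + r ^ 2 • p with hy₀
  clear_value y₀
  -- boundedness of the family
  have hbdd : ∀ x : E N, BddAbove (Set.range fun y : E N => u y - ‖x - y‖ ^ 2 / (2 * r ^ 2)) := by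
    intro x
    refine ⟨M, ?_⟩
    rintro z ⟨y, rfl⟩
    have h1 : u y ≤ M := (abs_le.1 (hM y)).2
    have h2 : 0 ≤ ‖x - y‖ ^ 2 / (2 * r ^ 2) := by positivity
    simp only
    linarith
  have hle : ∀ x y : E N, u y - ‖x - y‖ ^ 2 / (2 * r ^ 2) ≤ supConv u r x :=
    fun x y => le_ciSup (hbdd x) y
  have hnorm : ‖x₀ - y₀‖ ^ 2 / (2 * r ^ 2) = r ^ 2 / 2 * ‖p‖ ^ 2 := by
    have h1 : x₀ - y₀ = -(r ^ 2 • p) := by rw [hy₀]; abel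
    rw [h1, norm_neg, norm_smul, Real.norm_eq_abs, abs_of_pos hr2, mul_pow]
    field_simp
  -- eventual inequality on a ball
  have heb : ∀ᶠ h in 𝓝 (0 : E N), e h ≤ ‖h‖ ^ 2 := by
    filter_upwards [he.def one_pos] with h hh
    have h1 : e h ≤ |e h| := le_abs_self _
    have h2 : ‖e h‖ = |e h| := rfl
    have h3 : ‖‖h‖ ^ 2‖ = ‖h‖ ^ 2 := by
      rw [Real.norm_eq_abs, abs_of_nonneg (by positivity)]
    rw [h2, h3] at hh
    linarith
  have hball := hev.and heb
  rw [Metric.eventually_nhds_iff] at hball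
  obtain ⟨δ, hδ, hball⟩ := hball
  obtain ⟨K, hK0, hTX⟩ : ∃ K : ℝ, 0 ≤ K ∧ ∀ h : E N, ⟪X h, h⟫ ≤ K * ‖h‖ ^ 2 := by
    set T : E N →L[ℝ] E N := LinearMap.toContinuousLinearMap X with hT
    refine ⟨‖T‖, norm_nonneg _, fun h => ?_⟩
    calc ⟪X h, h⟫ ≤ ‖X h‖ * ‖h‖ := real_inner_le_norm _ _
      _ = ‖T h‖ * ‖h‖ := by rw [hT]; simp
      _ ≤ (‖T‖ * ‖h‖) * ‖h‖ := mul_le_mul_of_nonneg_right (T.le_opNorm h) (norm_nonneg _)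
      _ = ‖T‖ * ‖h‖ ^ 2 := by ring
  set C : ℝ := K / 2 + 1 + 1 / (2 * r ^ 2) with hC
  clear_value C
  have hC0 : 0 < C := by
    have h1 : (0:ℝ) < 1 / (2 * r ^ 2) := by positivity
    rw [hC]; linarith
  -- key quantitative inequality
  have key : ∀ (y : E N) (t : ℝ), 0 < t → t < δ →
      u y - ‖x₀ - y‖ ^ 2 / (2 * r ^ 2) ≤
        supConv u r x₀ - t * (‖y - y₀‖ / r ^ 2) + C * t ^ 2 := by
    intro y t ht htδ
    set q : E N := p + (r ^ 2)⁻¹ • (x₀ - y) with hq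
    clear_value q
    have h1 : q = (r ^ 2)⁻¹ • (y₀ - y) := by
      rw [hq, hy₀, smul_sub, smul_sub, smul_add, smul_smul,
        inv_mul_cancel₀ hr2.ne', one_smul]
      abel
    have hqnorm : ‖q‖ = ‖y - y₀‖ / r ^ 2 := by
      rw [h1, norm_smul, Real.norm_eq_abs, abs_of_pos (inv_pos.2 hr2), ← norm_neg,
        neg_sub, div_eq_inv_mul]
    by_cases hq0 : q = 0
    · have hzero : ‖y - y₀‖ / r ^ 2 = 0 := by rw [← hqnorm, hq0, norm_zero]
      have h2 := hle x₀ y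
      have h3 : 0 ≤ C * t ^ 2 := by positivity
      rw [hzero, mul_zero]
      linarith
    · have hqn : 0 < ‖q‖ := norm_pos_iff.mpr hq0
      set h : E N := (-(t / ‖q‖)) • q with hhdef
      clear_value h
      have hh : ‖h‖ = t := by
        rw [hhdef, norm_smul, Real.norm_eq_abs, abs_neg, abs_div,
          abs_of_pos ht, abs_of_pos hqn, div_mul_cancel₀ _ hqn.ne']
      have hht2 : ‖h‖ ^ 2 = t ^ 2 := by rw [hh]
      obtain ⟨hw, hebh⟩ := hball (show dist h 0 < δ by rw [dist_zero_right, hh]; exact htδ)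
      have hlow := hle (x₀ + h) y
      have hexp : ‖x₀ + h - y‖ ^ 2 = ‖x₀ - y‖ ^ 2 + 2 * ⟪x₀ - y, h⟫ + ‖h‖ ^ 2 := by
        rw [show x₀ + h - y = (x₀ - y) + h by abel, @norm_add_sq_real]
      have heq1 : ‖x₀ + h - y‖ ^ 2 / (2 * r ^ 2)
          = ‖x₀ - y‖ ^ 2 / (2 * r ^ 2) + (r ^ 2)⁻¹ * ⟪x₀ - y, h⟫ + t ^ 2 / (2 * r ^ 2) := by
        rw [hexp, hht2]
        field_simp
      have hinner : ⟪p, h⟫ + (r ^ 2)⁻¹ * ⟪x₀ - y, h⟫ = -(t * ‖q‖) := by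
        have h2 : ⟪q, h⟫ = -(t * ‖q‖) := by
          rw [hhdef, real_inner_smul_right, real_inner_self_eq_norm_sq]
          field_simp
        rw [← h2, hq, inner_add_left, real_inner_smul_left]
      have hXh : (1 / 2) * ⟪X h, h⟫ ≤ K / 2 * t ^ 2 := by
        have := hTX h
        rw [hht2] at this
        linarith
      have hebt : e h ≤ t ^ 2 := by rw [← hht2]; exact hebh
      rw [← hqnorm]
      have hCt : C * t ^ 2 = K / 2 * t ^ 2 + t ^ 2 + t ^ 2 / (2 * r ^ 2) := by
        rw [hC]; field_simp
      rw [heq1] at hlow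
      linarith [hlow.trans hw]
  -- upper bound: the sup is attained at y₀
  have hupper : supConv u r x₀ ≤ u y₀ - r ^ 2 / 2 * ‖p‖ ^ 2 := by
    by_contra hcon
    push_neg at hcon
    set c : ℝ := supConv u r x₀ - (u y₀ - r ^ 2 / 2 * ‖p‖ ^ 2) with hc
    clear_value c
    have hc0 : 0 < c := by rw [hc]; linarith
    have husc' : ∀ᶠ y in 𝓝 y₀, u y < u y₀ + c / 4 := husc y₀ (u y₀ + c / 4) (by linarith)
    have hcont : Filter.Tendsto (fun y : E N => ‖x₀ - y‖ ^ 2 / (2 * r ^ 2)) (𝓝 y₀)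
        (𝓝 (‖x₀ - y₀‖ ^ 2 / (2 * r ^ 2))) := by
      apply Filter.Tendsto.div_const
      exact (((continuous_const.sub continuous_id).norm.pow 2).tendsto y₀)
    have hcont' : ∀ᶠ y in 𝓝 y₀,
        ‖x₀ - y₀‖ ^ 2 / (2 * r ^ 2) - c / 4 < ‖x₀ - y‖ ^ 2 / (2 * r ^ 2) :=
      hcont.eventually (eventually_gt_nhds (by linarith))
    have hcomb : ∀ᶠ y in 𝓝 y₀,
        u y - ‖x₀ - y‖ ^ 2 / (2 * r ^ 2) < supConv u r x₀ - c / 2 := by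
      filter_upwards [husc', hcont'] with y hy1 hy2
      have := hnorm
      have hcc : u y₀ - r ^ 2 / 2 * ‖p‖ ^ 2 = supConv u r x₀ - c := by rw [hc]; ring
      linarith
    rw [Metric.eventually_nhds_iff] at hcomb
    obtain ⟨ρ, hρ, hcomb⟩ := hcomb
    set s : ℝ := ρ / r ^ 2 with hs
    clear_value s
    have hs0 : 0 < s := by rw [hs]; exact div_pos hρ hr2
    set t : ℝ := min (δ / 2) (s / (2 * C)) with htdef
    clear_value t
    have ht : 0 < t := by
      rw [htdef]; exact lt_min (by linarith) (div_pos hs0 (by linarith))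
    have htδ : t < δ := by
      rw [htdef]; exact lt_of_le_of_lt (min_le_left _ _) (by linarith)
    have hfar : ∀ y : E N, ρ ≤ ‖y - y₀‖ →
        u y - ‖x₀ - y‖ ^ 2 / (2 * r ^ 2) ≤ supConv u r x₀ - t * s / 2 := by
      intro y hy
      have h1 := key y t ht htδ
      have h2 : s ≤ ‖y - y₀‖ / r ^ 2 := by
        rw [hs]; exact (div_le_div_iff_of_pos_right hr2).2 hy
      have h3 : C * t ≤ s / 2 := by
        have h4 : t ≤ s / (2 * C) := by rw [htdef]; exact min_le_right _ _
        have := mul_le_mul_of_nonneg_left h4 hC0.le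
        rw [show C * (s / (2 * C)) = s / 2 by field_simp] at this
        exact this
      have h2' : t * s ≤ t * (‖y - y₀‖ / r ^ 2) := mul_le_mul_of_nonneg_left h2 ht.le
      have h3' : C * t ^ 2 ≤ s / 2 * t := by
        calc C * t ^ 2 = (C * t) * t := by ring
          _ ≤ (s / 2) * t := mul_le_mul_of_nonneg_right h3 ht.le
      linarith
    have hall : ∀ y : E N,
        u y - ‖x₀ - y‖ ^ 2 / (2 * r ^ 2) ≤ supConv u r x₀ - min (c / 2) (t * s / 2) := by
      intro y
      rcases lt_or_ge (dist y y₀) ρ with hcase | hcase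
      · have := le_of_lt (hcomb hcase)
        have hm : min (c / 2) (t * s / 2) ≤ c / 2 := min_le_left _ _
        linarith
      · rw [dist_eq_norm] at hcase
        have := hfar y hcase
        have hm : min (c / 2) (t * s / 2) ≤ t * s / 2 := min_le_right _ _
        linarith
    have h5 : supConv u r x₀ ≤ supConv u r x₀ - min (c / 2) (t * s / 2) := ciSup_le hall
    have hmin : 0 < min (c / 2) (t * s / 2) := lt_min (by linarith) (div_pos (mul_pos ht hs0) two_pos)
    linarith
  have hlower : u y₀ - r ^ 2 / 2 * ‖p‖ ^ 2 ≤ supConv u r x₀ := by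
    have := hle x₀ y₀
    rw [hnorm] at this
    exact this
  have hpart1 : supConv u r x₀ = u y₀ - r ^ 2 / 2 * ‖p‖ ^ 2 := le_antisymm hupper hlower
  refine ⟨hpart1, hXsym, e, he, ?_⟩
  filter_upwards [hev] with h hh
  have h1 := hle (x₀ + h) (y₀ + h)
  have h2 : x₀ + h - (y₀ + h) = x₀ - y₀ := by abel
  rw [h2, hnorm] at h1
  rw [hpart1] at hh
  linarith
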